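/- Suppose the closed-loop system f_c(x, s) = g(x, h(x, s)) is equivariant: there exist β and ρ such that h is (β, γ, ρ)-symmetric and Dγ(x)(g(x, u)) = g(γ(x), β(u)) for all x, u. Then for any solution ξ_c of x' = f_c(x, s) with ξ_c(0) = x₀, the curve t ↦ γ(ξ_c(t)) is a solution of x' = f_c(x, ρ(s)) with initial condition γ(x₀); i.e., γ(ξ_c(x₀, s, t)) = ξ_c(γ(x₀), ρ(s), t) for all t ≥ 0. -/
import Mathlib


/-- If the closed-loop system `f_c x s = g x (h x s)` is equivariant
(`h` is `(β, γ, ρ)`-symmetric and `Dγ x (g x u) = g (γ x) (β u)`), then for the flow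
`ξ_c` (the unique solution of `x' = f_c (x, s)`), we have
`γ (ξ_c x₀ s t) = ξ_c (γ x₀) (ρ s) t` for all `t ≥ 0`. -/
theorem stmt5 {n m : ℕ} {S : Type*}
    (g : (Fin n → ℝ) → (Fin m → ℝ) → (Fin n → ℝ))
    (h : (Fin n → ℝ) → S → (Fin m → ℝ))
    (γ : (Fin n → ℝ) → (Fin n → ℝ))
    (Dγ : (Fin n → ℝ) → ((Fin n → ℝ) →L[ℝ] (Fin n → ℝ)))
    (hγ : ∀ x, HasFDerivAt γ (Dγ x) x)
    (β : (Fin m → ℝ) → (Fin m → ℝ)) (ρ : S → S)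
    (hg : ∀ x u, Dγ x (g x u) = g (γ x) (β u))
    (hh : ∀ x s, β (h x s) = h (γ x) (ρ s))
    -- `ξc x₀ s` is a solution of `x' = g (x, h (x, s))` starting at `x₀` ...
    (ξc : (Fin n → ℝ) → S → ℝ → (Fin n → ℝ))
    (hinit : ∀ x₀ s, ξc x₀ s 0 = x₀)
    (hode : ∀ x₀ s t, 0 ≤ t →
      HasDerivAt (ξc x₀ s) (g (ξc x₀ s t) (h (ξc x₀ s t) s)) t)
    -- ... and it is the unique such solution.
    (huniq : ∀ (x₀ : Fin n → ℝ) (s : S) (η : ℝ → (Fin n → ℝ)),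
      η 0 = x₀ → (∀ t, 0 ≤ t → HasDerivAt η (g (η t) (h (η t) s)) t) →
      ∀ t, 0 ≤ t → η t = ξc x₀ s t) :
    ∀ (x₀ : Fin n → ℝ) (s : S) (t : ℝ), 0 ≤ t →
      γ (ξc x₀ s t) = ξc (γ x₀) (ρ s) t := by
  intro x₀ s t ht
  refine huniq (γ x₀) (ρ s) (fun t => γ (ξc x₀ s t)) (by simp [hinit]) ?_ t ht
  intro u hu
  have hd : HasDerivAt (fun t => γ (ξc x₀ s t))
      (Dγ (ξc x₀ s u) (g (ξc x₀ s u) (h (ξc x₀ s u) s))) u :=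
    (hγ (ξc x₀ s u)).comp_hasDerivAt u (hode x₀ s u hu)
  rwa [hg, hh] at hd
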